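/- There exists a constant c > 0 (one may take c = 1/128) such that for every point (x,y) ∈ ∂Q, every radius r < 1/4, every i ∈ {1,2,3,4} and both choices of sign, the Lebesgue measure satisfies L²(B((x,y),r) ∩ Ω^{p_v}_{±i}) ≥ c·r², where B((x,y),r) is the open Euclidean ball of radius r centered at (x,y). -/

import Mathlib

open MeasureTheory Set
open scoped ENNReal NNReal

noncomputable section

/-- The plane `ℝ²`. -/
abbrev E2 := EuclideanSpace ℝ (Fin 2)

/-- The point `(x, y) ∈ ℝ²`. -/
def pt (x y : ℝ) : E2 := WithLp.toLp 2 ![x, y]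

def A1 : Matrix (Fin 2) (Fin 2) ℝ := !![1, 0; 0, 1]
def A2 : Matrix (Fin 2) (Fin 2) ℝ := !![0, 1; 1, 0]
def A3 : Matrix (Fin 2) (Fin 2) ℝ := !![-1, 0; 0, 1]
def A4 : Matrix (Fin 2) (Fin 2) ℝ := !![0, -1; 1, 0]

/-- The set `E = {±A₁, ±A₂, ±A₃, ±A₄}`. -/
def Eset : Set (Matrix (Fin 2) (Fin 2) ℝ) := {A1, -A1, A2, -A2, A3, -A3, A4, -A4}

/-- The continuous linear map on `ℝ²` associated to a `2 × 2` matrix. -/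
def matCLM (A : Matrix (Fin 2) (Fin 2) ℝ) : E2 →L[ℝ] E2 :=
  LinearMap.toContinuousLinearMap (Matrix.toEuclideanLin A)

/-- `a(x,y) = min {1+x, 1−x, 1+y, 1−y}`. -/
def aFun (x y : ℝ) : ℝ := min (min (1 + x) (1 - x)) (min (1 + y) (1 - y))

/-- `b(x,y) = max {1−|x|, 1−|y|}`. -/
def bFun (x y : ℝ) : ℝ := max (1 - |x|) (1 - |y|)

/-- The function `c` of the construction. -/
def cFun (x y : ℝ) : ℝ :=
  if |x| ≤ y then 1 - |x|
  else if |y| ≤ -x then 1 - y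
  else if |x| ≤ -y then 1 - x
  else 1 - |y|

/-- The function `d` of the construction. -/
def dFun (x y : ℝ) : ℝ :=
  if |x| ≤ y then 1 - x
  else if |y| ≤ -x then 1 + y
  else if |x| ≤ -y then 1 - |x|
  else 1 - |y|

/-- The rescaling `f_k(x,y) = 2^{−k} f(2^k x, 2^k y)`. -/
def resc (f : ℝ → ℝ → ℝ) (k : ℕ) (x y : ℝ) : ℝ :=
  (2 : ℝ) ^ (-(k : ℤ)) * f ((2 : ℝ) ^ k * x) ((2 : ℝ) ^ k * y)

/-- `x₀ = 0`, `x_k = 2 − 2^{1−k}` for `k ≥ 1`. -/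
def xc : ℕ → ℝ
  | 0 => 0
  | (k + 1) => 2 - (2 : ℝ) ^ (1 - ((k : ℤ) + 1))

/-- `y_k^i = i · 2^{1−k}`. -/
def yc (k i : ℕ) : ℝ := (i : ℝ) * (2 : ℝ) ^ (1 - (k : ℤ))

/-- The open square `Q_{k,i} = (x_{k−1}, x_k) × (y_k^i, y_k^{i+1})`. -/
def Qki (k i : ℕ) : Set E2 :=
  {z | z 0 ∈ Set.Ioo (xc (k - 1)) (xc k) ∧ z 1 ∈ Set.Ioo (yc k i) (yc k (i + 1))}

/-- The triangle `T = {(x,y) : 0 ≤ y ≤ x ≤ 2}`. -/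
def Tset : Set E2 := {z | 0 ≤ z 1 ∧ z 1 ≤ z 0 ∧ z 0 ≤ 2}

/-- The open square `Q = (−2,2) × (−2,2)`. -/
def Qsq : Set E2 := {z | z 0 ∈ Set.Ioo (-2 : ℝ) 2 ∧ z 1 ∈ Set.Ioo (-2 : ℝ) 2}

/-- First coordinate of the center of `Q_{k,i}`. -/
def ctrX (k : ℕ) : ℝ := (xc (k - 1) + xc k) / 2

/-- Second coordinate of the center of `Q_{k,i}`. -/
def ctrY (k i : ℕ) : ℝ := (yc k i + yc k (i + 1)) / 2

/-- The formula for the second component of `p_v` on `Q_{k,i} ∩ T` (in shifted coordinates):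
`b_k` if `i = 2^k − 2`, `d_k` if `i` is even (hence `i ≤ 2^k − 4`), `c_k` if `i` is odd
(hence `i ≤ 2^k − 3`). -/
def secondFun (k i : ℕ) (x y : ℝ) : ℝ :=
  if i = 2 ^ k - 2 then resc bFun k x y
  else if i % 2 = 0 then resc dFun k x y
  else resc cFun k x y

/-- The defining properties of the vectorial pyramid `p_v` on the closed square `[−2,2]²`:
on each `Q_{k,i} ∩ T` it is given by the explicit formulas; each component is invariant under
the reflections `(x,y) ↦ (y,x)`, `(x,y) ↦ (−x,y)`, `(x,y) ↦ (x,−y)`; and it vanishes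
on `∂Q`. -/
def PyramidSpec (p : E2 → E2) : Prop :=
  (∀ k : ℕ, 1 ≤ k → ∀ i : ℕ, i ≤ 2 ^ k - 2 → ∀ z ∈ Qki k i ∩ Tset,
      p z 0 = resc aFun k (z 0 - ctrX k) (z 1 - ctrY k i) ∧
      p z 1 = secondFun k i (z 0 - ctrX k) (z 1 - ctrY k i)) ∧
  (∀ x y : ℝ,
      p (pt y x) = p (pt x y) ∧ p (pt (-x) y) = p (pt x y) ∧ p (pt x (-y)) = p (pt x y)) ∧
  (∀ z ∈ frontier Qsq, p z = 0)

/-- The set `Ω^{p}_{A} = {z ∈ Q : p is differentiable at z with Dp(z) = A}`. -/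
def OmegaSet (p : E2 → E2) (A : Matrix (Fin 2) (Fin 2) ℝ) : Set E2 :=
  {z | z ∈ Qsq ∧ HasFDerivAt p (matCLM A) z}

-- basics
@[simp] lemma pt0 (x y : ℝ) : pt x y 0 = x := rfl
@[simp] lemma pt1 (x y : ℝ) : pt x y 1 = y := rfl
lemma pt_eta (z : E2) : pt (z 0) (z 1) = z := by
  ext j; fin_cases j <;> simp [pt]
lemma matCLM_apply (A : Matrix (Fin 2) (Fin 2) ℝ) (w : E2) (i : Fin 2) :
    matCLM A w i = A i 0 * w 0 + A i 1 * w 1 := by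
  fin_cases i <;> simp [matCLM, Matrix.toEuclideanLin_apply, Matrix.mulVec, dotProduct, Fin.sum_univ_two]
lemma add_apply' (f g : E2) (i : Fin 2) : (f + g) i = f i + g i := rfl

def rectS (a b c d : ℝ) : Set E2 := {w | w 0 ∈ Set.Ioo a b ∧ w 1 ∈ Set.Ioo c d}

lemma isOpen_rectS (a b c d : ℝ) : IsOpen (rectS a b c d) := by
  have h0 : rectS a b c d = (EuclideanSpace.proj (0:Fin 2) : E2 →L[ℝ] ℝ) ⁻¹' (Set.Ioo a b) ∩
      (EuclideanSpace.proj (1:Fin 2) : E2 →L[ℝ] ℝ) ⁻¹' (Set.Ioo c d) := by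
    ext w; simp [rectS]
  rw [h0]
  exact ((isOpen_Ioo.preimage (EuclideanSpace.proj (0:Fin 2)).continuous).inter
    (isOpen_Ioo.preimage (EuclideanSpace.proj (1:Fin 2)).continuous))

lemma volume_rectS (a b c d : ℝ) :
    volume (rectS a b c d) = ENNReal.ofReal (b - a) * ENNReal.ofReal (d - c) := by
  have e := EuclideanSpace.volume_preserving_symm_measurableEquiv_toLp (Fin 2)
  have h : rectS a b c d = (MeasurableEquiv.toLp 2 (Fin 2 → ℝ)).symm ⁻¹'
      (Set.univ.pi ![Set.Ioo a b, Set.Ioo c d]) := by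
    ext w
    simp [rectS, Fin.forall_fin_two]
  rw [h, e.measure_preimage]
  · rw [volume_pi_pi]
    simp [Fin.prod_univ_two]
  · exact (MeasurableSet.univ_pi (by
      intro i; fin_cases i <;> exact measurableSet_Ioo)).nullMeasurableSet

lemma dist_eq2 (w z : E2) : dist w z = Real.sqrt ((w 0 - z 0)^2 + (w 1 - z 1)^2) := by
  rw [EuclideanSpace.dist_eq, Fin.sum_univ_two]
  rw [Real.dist_eq, Real.dist_eq, sq_abs, sq_abs]

lemma in_ball_aux {r t σ : ℝ} (hσ : 0 < σ) (hσr : σ ≤ r/16) (hr : 0 < r) {w : E2}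
    (h0 : |w 0 - 2| ≤ 4*σ) (h1 : |w 1 - t| ≤ 8*σ) : w ∈ Metric.ball (pt 2 t) r := by
  rw [Metric.mem_ball, dist_eq2, pt0, pt1]
  rw [Real.sqrt_lt' hr]
  obtain ⟨h0a, h0b⟩ := abs_le.mp h0
  obtain ⟨h1a, h1b⟩ := abs_le.mp h1
  nlinarith [sq_nonneg (w 0 - 2), sq_nonneg (w 1 - t)]

lemma aFun_left {X Y : ℝ} (h : X ≤ -|Y|) : aFun X Y = 1 + X := by
  have h' := abs_le.mp (show |Y| ≤ -X by linarith)
  have h0 : |Y| ≥ 0 := abs_nonneg Y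
  unfold aFun
  rw [show min (1+X) (1-X) = 1+X from min_eq_left (by linarith),
    min_eq_left (le_min (by linarith) (by linarith))]
lemma aFun_right {X Y : ℝ} (h : |Y| ≤ X) : aFun X Y = 1 - X := by
  have h' := abs_le.mp h
  have h0 : |Y| ≥ 0 := abs_nonneg Y
  unfold aFun
  rw [show min (1+X) (1-X) = 1-X from min_eq_right (by linarith),
    min_eq_left (le_min (by linarith) (by linarith))]
lemma aFun_bot {X Y : ℝ} (h : Y ≤ -|X|) : aFun X Y = 1 + Y := by
  have h' := abs_le.mp (show |X| ≤ -Y by linarith)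
  have h0 : |X| ≥ 0 := abs_nonneg X
  unfold aFun
  rw [show min (1+Y) (1-Y) = 1+Y from min_eq_left (by linarith),
    min_eq_right (le_min (by linarith) (by linarith))]
lemma aFun_top {X Y : ℝ} (h : |X| ≤ Y) : aFun X Y = 1 - Y := by
  have h' := abs_le.mp h
  have h0 : |X| ≥ 0 := abs_nonneg X
  unfold aFun
  rw [show min (1+Y) (1-Y) = 1-Y from min_eq_right (by linarith),
    min_eq_right (le_min (by linarith) (by linarith))]

-- center arithmetic
lemma xc_eq {k : ℕ} (hk : 1 ≤ k) : xc k = 2 - 2*(2:ℝ)^(-(k:ℤ)) := by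
  cases k with
  | zero => omega
  | succ j =>
    show (2:ℝ) - 2 ^ (1 - ((j:ℤ) + 1)) = _
    rw [show (1 - ((j:ℤ)+1)) = -(((j+1:ℕ)):ℤ) + 1 by push_cast; ring, zpow_add₀ (by norm_num : (2:ℝ) ≠ 0)]
    ring

lemma ctrX_eq {k : ℕ} (hk : 2 ≤ k) : ctrX k = 2 - 3*(2:ℝ)^(-(k:ℤ)) := by
  unfold ctrX
  rw [xc_eq (by omega : 1 ≤ k), xc_eq (show 1 ≤ k-1 by omega)]
  have h1 : (-(((k-1:ℕ)):ℤ)) = -(k:ℤ) + 1 := by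
    have : ((k-1:ℕ):ℤ) = (k:ℤ) - 1 := by omega
    rw [this]; ring
  rw [h1, zpow_add₀ (by norm_num : (2:ℝ) ≠ 0)]
  ring

lemma yc_eq (k i : ℕ) : yc k i = (i:ℝ)*2*(2:ℝ)^(-(k:ℤ)) := by
  unfold yc
  rw [show (1-(k:ℤ)) = -(k:ℤ)+1 by ring, zpow_add₀ (by norm_num : (2:ℝ) ≠ 0)]
  ring

lemma ctrY_eq (k i : ℕ) : ctrY k i = (2*(i:ℝ)+1)*(2:ℝ)^(-(k:ℤ)) := by
  unfold ctrY
  rw [yc_eq, yc_eq]; push_cast; ring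

-- GoodRect
def GoodRect (p : E2 → E2) (r : ℝ) (z : E2) (A : Matrix (Fin 2) (Fin 2) ℝ) : Prop :=
  ∃ a b c d : ℝ, ∃ v : E2, r/128 ≤ b - a ∧ r/128 ≤ d - c ∧
    rectS a b c d ⊆ Metric.ball z r ∧ rectS a b c d ⊆ Qsq ∧
    ∀ w ∈ rectS a b c d, p w = matCLM A w + v

lemma goodRect_volume {p : E2 → E2} {r : ℝ} {z : E2} {A : Matrix (Fin 2) (Fin 2) ℝ}
    (hr : 0 < r) (h : GoodRect p r z A) :
    ENNReal.ofReal ((1/16384)*r^2) ≤ volume (Metric.ball z r ∩ OmegaSet p A) := by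
  obtain ⟨a, b, c, d, v, h1, h2, hball, hQ, haff⟩ := h
  have hsub : rectS a b c d ⊆ Metric.ball z r ∩ OmegaSet p A := by
    intro w hw
    refine ⟨hball hw, hQ hw, ?_⟩
    have hg : HasFDerivAt (fun u => matCLM A u + v) (matCLM A) w :=
      ((matCLM A).hasFDerivAt).add_const v
    exact hg.congr_of_eventuallyEq
      (Filter.eventually_of_mem ((isOpen_rectS a b c d).mem_nhds hw) haff)
  calc ENNReal.ofReal ((1/16384)*r^2)
      = ENNReal.ofReal (r/128) * ENNReal.ofReal (r/128) := by
        rw [← ENNReal.ofReal_mul (by positivity)]; ring_nf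
    _ ≤ ENNReal.ofReal (b-a) * ENNReal.ofReal (d-c) :=
        mul_le_mul' (ENNReal.ofReal_le_ofReal h1) (ENNReal.ofReal_le_ofReal h2)
    _ = volume (rectS a b c d) := (volume_rectS a b c d).symm
    _ ≤ _ := measure_mono hsub

-- matrix identities
lemma negA1 : -A1 = !![(-1:ℝ), 0; 0, -1] := by
  ext i j; fin_cases i <;> fin_cases j <;> simp [A1]
lemma negA2 : -A2 = !![(0:ℝ), -1; -1, 0] := by
  ext i j; fin_cases i <;> fin_cases j <;> simp [A2]
lemma negA3 : -A3 = !![(1:ℝ), 0; 0, -1] := by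
  ext i j; fin_cases i <;> fin_cases j <;> simp [A3]
lemma negA4 : -A4 = !![(0:ℝ), 1; -1, 0] := by
  ext i j; fin_cases i <;> fin_cases j <;> simp [A4]

lemma mul_ent (A B : Matrix (Fin 2) (Fin 2) ℝ) (i j : Fin 2) :
    (A * B) i j = A i 0 * B 0 j + A i 1 * B 1 j := by
  rw [Matrix.mul_apply, Fin.sum_univ_two]

example : A3 * A2 = A4 := by
  ext i j; fin_cases i <;> fin_cases j <;> simp [mul_ent, A2, A3, A4]
example : (-A3) * A2 = -A4 := by
  ext i j; fin_cases i <;> fin_cases j <;> simp [mul_ent, A2, A3, A4]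

lemma sq_mul_self (M N : Matrix (Fin 2) (Fin 2) ℝ) (h : N * N = 1) (A : Matrix (Fin 2) (Fin 2) ℝ) :
    A * N * N = A := by rw [Matrix.mul_assoc, h, Matrix.mul_one]

lemma A2_sq : A2 * A2 = 1 := by
  ext i j; fin_cases i <;> fin_cases j <;> simp [mul_ent, A2, Matrix.one_apply]
lemma A3_sq : A3 * A3 = 1 := by
  ext i j; fin_cases i <;> fin_cases j <;> simp [mul_ent, A3, Matrix.one_apply]
lemma nA3_sq : (-A3) * (-A3) = 1 := by rw [Matrix.neg_mul, Matrix.mul_neg, neg_neg, A3_sq]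

lemma Eset_mul_swap {A : Matrix (Fin 2) (Fin 2) ℝ} (hA : A ∈ Eset) : A * A2 ∈ Eset := by
  simp only [Eset, mem_insert_iff, mem_singleton_iff] at hA ⊢
  rcases hA with rfl|rfl|rfl|rfl|rfl|rfl|rfl|rfl
  · exact Or.inr (Or.inr (Or.inl (by ext i j; fin_cases i <;> fin_cases j <;> simp [mul_ent, A1, A2])))
  · exact Or.inr (Or.inr (Or.inr (Or.inl (by ext i j; fin_cases i <;> fin_cases j <;> simp [mul_ent, A1, A2]))))
  · exact Or.inl (by ext i j; fin_cases i <;> fin_cases j <;> simp [mul_ent, A1, A2])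
  · exact Or.inr (Or.inl (by ext i j; fin_cases i <;> fin_cases j <;> simp [mul_ent, A1, A2]))
  · exact Or.inr (Or.inr (Or.inr (Or.inr (Or.inr (Or.inr (Or.inl (by ext i j; fin_cases i <;> fin_cases j <;> simp [mul_ent, A2, A3, A4])))))))
  · exact Or.inr (Or.inr (Or.inr (Or.inr (Or.inr (Or.inr (Or.inr (by ext i j; fin_cases i <;> fin_cases j <;> simp [mul_ent, A2, A3, A4])))))))
  · exact Or.inr (Or.inr (Or.inr (Or.inr (Or.inl (by ext i j; fin_cases i <;> fin_cases j <;> simp [mul_ent, A2, A3, A4])))))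
  · exact Or.inr (Or.inr (Or.inr (Or.inr (Or.inr (Or.inl (by ext i j; fin_cases i <;> fin_cases j <;> simp [mul_ent, A2, A3, A4]))))))

lemma Eset_mul_x {A : Matrix (Fin 2) (Fin 2) ℝ} (hA : A ∈ Eset) : A * A3 ∈ Eset := by
  simp only [Eset, mem_insert_iff, mem_singleton_iff] at hA ⊢
  rcases hA with rfl|rfl|rfl|rfl|rfl|rfl|rfl|rfl
  · exact Or.inr (Or.inr (Or.inr (Or.inr (Or.inl (by ext i j; fin_cases i <;> fin_cases j <;> simp [mul_ent, A1, A3])))))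
  · exact Or.inr (Or.inr (Or.inr (Or.inr (Or.inr (Or.inl (by ext i j; fin_cases i <;> fin_cases j <;> simp [mul_ent, A1, A3]))))))
  · exact Or.inr (Or.inr (Or.inr (Or.inr (Or.inr (Or.inr (Or.inr (by ext i j; fin_cases i <;> fin_cases j <;> simp [mul_ent, A2, A3, A4])))))))
  · exact Or.inr (Or.inr (Or.inr (Or.inr (Or.inr (Or.inr (Or.inl (by ext i j; fin_cases i <;> fin_cases j <;> simp [mul_ent, A2, A3, A4])))))))
  · exact Or.inl (by ext i j; fin_cases i <;> fin_cases j <;> simp [mul_ent, A1, A3])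
  · exact Or.inr (Or.inl (by ext i j; fin_cases i <;> fin_cases j <;> simp [mul_ent, A1, A3]))
  · exact Or.inr (Or.inr (Or.inr (Or.inl (by ext i j; fin_cases i <;> fin_cases j <;> simp [mul_ent, A2, A3, A4]))))
  · exact Or.inr (Or.inr (Or.inl (by ext i j; fin_cases i <;> fin_cases j <;> simp [mul_ent, A2, A3, A4])))

lemma Eset_mul_y {A : Matrix (Fin 2) (Fin 2) ℝ} (hA : A ∈ Eset) : A * (-A3) ∈ Eset := by
  simp only [Eset, mem_insert_iff, mem_singleton_iff] at hA ⊢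
  rcases hA with rfl|rfl|rfl|rfl|rfl|rfl|rfl|rfl
  · exact Or.inr (Or.inr (Or.inr (Or.inr (Or.inr (Or.inl (by ext i j; fin_cases i <;> fin_cases j <;> simp [mul_ent, A1, A3]))))))
  · exact Or.inr (Or.inr (Or.inr (Or.inr (Or.inl (by ext i j; fin_cases i <;> fin_cases j <;> simp [mul_ent, A1, A3])))))
  · exact Or.inr (Or.inr (Or.inr (Or.inr (Or.inr (Or.inr (Or.inl (by ext i j; fin_cases i <;> fin_cases j <;> simp [mul_ent, A2, A3, A4])))))))
  · exact Or.inr (Or.inr (Or.inr (Or.inr (Or.inr (Or.inr (Or.inr (by ext i j; fin_cases i <;> fin_cases j <;> simp [mul_ent, A2, A3, A4])))))))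
  · exact Or.inr (Or.inl (by ext i j; fin_cases i <;> fin_cases j <;> simp [mul_ent, A1, A3]))
  · exact Or.inl (by ext i j; fin_cases i <;> fin_cases j <;> simp [mul_ent, A1, A3])
  · exact Or.inr (Or.inr (Or.inl (by ext i j; fin_cases i <;> fin_cases j <;> simp [mul_ent, A2, A3, A4])))
  · exact Or.inr (Or.inr (Or.inr (Or.inl (by ext i j; fin_cases i <;> fin_cases j <;> simp [mul_ent, A2, A3, A4]))))

-- transfers
lemma trans_yflip {p : E2 → E2} (hs : ∀ x y : ℝ, p (pt x (-y)) = p (pt x y))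
    {r x y : ℝ} {A : Matrix (Fin 2) (Fin 2) ℝ} (h : GoodRect p r (pt x y) A) :
    GoodRect p r (pt x (-y)) (A * (-A3)) := by
  obtain ⟨a, b, c, d, v, h1, h2, hball, hQ, haff⟩ := h
  refine ⟨a, b, -d, -c, v, h1, by linarith, ?_, ?_, ?_⟩ <;> intro w hw <;>
    obtain ⟨hwa, hwb⟩ := hw
  all_goals
    have hw' : pt (w 0) (-(w 1)) ∈ rectS a b c d := by
      refine ⟨by simpa using hwa, ?_⟩
      simp only [pt1, Set.mem_Ioo] at *
      constructor <;> linarith [hwb.1, hwb.2]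
  · have hb := hball hw'
    rw [Metric.mem_ball, dist_eq2] at hb ⊢
    simp only [pt0, pt1] at hb ⊢
    convert hb using 3 <;> ring
  · have hq := hQ hw'
    obtain ⟨hq1, hq2⟩ := hq
    simp only [pt0, pt1, Set.mem_Ioo] at hq1 hq2
    exact ⟨hq1, by constructor <;> simp only [Set.mem_Ioo] at * <;> linarith [hq2.1, hq2.2]⟩
  · have hpw : p w = matCLM A (pt (w 0) (-(w 1))) + v := by
      rw [← pt_eta w, ← hs (w 0) (w 1)]
      exact haff _ hw'
    rw [hpw]
    ext j
    rw [add_apply', add_apply', matCLM_apply, matCLM_apply, mul_ent, mul_ent, negA3]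
    first
    | (simp; ring)
    | simp
    | ring

lemma trans_xflip {p : E2 → E2} (hs : ∀ x y : ℝ, p (pt (-x) y) = p (pt x y))
    {r x y : ℝ} {A : Matrix (Fin 2) (Fin 2) ℝ} (h : GoodRect p r (pt x y) A) :
    GoodRect p r (pt (-x) y) (A * A3) := by
  obtain ⟨a, b, c, d, v, h1, h2, hball, hQ, haff⟩ := h
  refine ⟨-b, -a, c, d, v, by linarith, h2, ?_, ?_, ?_⟩ <;> intro w hw <;>
    obtain ⟨hwa, hwb⟩ := hw
  all_goals
    have hw' : pt (-(w 0)) (w 1) ∈ rectS a b c d := by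
      refine ⟨?_, by simpa using hwb⟩
      simp only [pt0, Set.mem_Ioo] at *
      constructor <;> linarith [hwa.1, hwa.2]
  · have hb := hball hw'
    rw [Metric.mem_ball, dist_eq2] at hb ⊢
    simp only [pt0, pt1] at hb ⊢
    convert hb using 3 <;> ring
  · have hq := hQ hw'
    obtain ⟨hq1, hq2⟩ := hq
    simp only [pt0, pt1, Set.mem_Ioo] at hq1 hq2
    exact ⟨by constructor <;> simp only [Set.mem_Ioo] at * <;> linarith [hq1.1, hq1.2], hq2⟩
  · have hpw : p w = matCLM A (pt (-(w 0)) (w 1)) + v := by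
      rw [← pt_eta w, ← hs (w 0) (w 1)]
      exact haff _ hw'
    rw [hpw]
    ext j
    rw [add_apply', add_apply', matCLM_apply, matCLM_apply, mul_ent, mul_ent]
    first
    | (simp [A3]; ring)
    | simp [A3]
    | ring

lemma trans_swap {p : E2 → E2} (hs : ∀ x y : ℝ, p (pt y x) = p (pt x y))
    {r x y : ℝ} {A : Matrix (Fin 2) (Fin 2) ℝ} (h : GoodRect p r (pt x y) A) :
    GoodRect p r (pt y x) (A * A2) := by
  obtain ⟨a, b, c, d, v, h1, h2, hball, hQ, haff⟩ := h
  refine ⟨c, d, a, b, v, h2, h1, ?_, ?_, ?_⟩ <;> intro w hw <;>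
    obtain ⟨hwa, hwb⟩ := hw
  all_goals
    have hw' : pt (w 1) (w 0) ∈ rectS a b c d := by
      exact ⟨by simpa using hwb, by simpa using hwa⟩
  · have hb := hball hw'
    rw [Metric.mem_ball, dist_eq2] at hb ⊢
    simp only [pt0, pt1] at hb ⊢
    rw [add_comm] at hb
    convert hb using 3 <;> ring
  · have hq := hQ hw'
    obtain ⟨hq1, hq2⟩ := hq
    simp only [pt0, pt1] at hq1 hq2
    exact ⟨hq2, hq1⟩
  · have hpw : p w = matCLM A (pt (w 1) (w 0)) + v := by
      have h' := haff _ hw'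
      rw [← hs (w 1) (w 0), pt_eta w] at h'
      exact h'
    rw [hpw]
    ext j
    rw [add_apply', add_apply', matCLM_apply, matCLM_apply, mul_ent, mul_ent]
    first
    | (simp [A2]; ring)
    | simp [A2]
    | ring

lemma scale_bound {K σ A u : ℝ} (hK : K*σ = 1) (hKpos : 0 < K) (h : A*σ ≤ u) : A ≤ K*u := by
  have h2 := mul_le_mul_of_nonneg_left h (le_of_lt hKpos)
  calc A = K*(A*σ) := by
        rw [show K*(A*σ) = A*(K*σ) by ring, hK]; ring
  _ ≤ K*u := h2

lemma scale_bound' {K σ B u : ℝ} (hK : K*σ = 1) (hKpos : 0 < K) (h : u ≤ B*σ) : K*u ≤ B := by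
  have h2 := mul_le_mul_of_nonneg_left h (le_of_lt hKpos)
  calc K*u ≤ K*(B*σ) := h2
  _ = B := by rw [show K*(B*σ) = B*(K*σ) by ring, hK]; ring

set_option maxHeartbeats 2000000 in
lemma mk_good {p : E2 → E2} (hp : PyramidSpec p) {k : ℕ} (hk : 7 ≤ k) {σ : ℝ}
    (hσdef : σ = (2:ℝ)^(-(k:ℤ))) {i : ℕ} (hi : i + 3 ≤ 2^k) {r t : ℝ} (hr : 0 < r)
    (hσr : σ ≤ r/16) (hrσ : r ≤ 32*σ) (hσ1 : σ ≤ 1/64)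
    (g : ℝ → ℝ → ℝ) (hsec : ∀ u v : ℝ, secondFun k i u v = resc g k u v)
    (hdist : ∀ u : ℝ, (i:ℝ)*2*σ ≤ u → u ≤ ((i:ℝ)+1)*2*σ → |u - t| ≤ 8*σ)
    (pu qu uu vu : ℝ) (hpu : -1 ≤ pu) (hqp : qu - pu = 1/4) (hq1 : qu ≤ 1)
    (huu : -1 ≤ uu) (hvu : vu - uu = 1/4) (hv1 : vu ≤ 1)
    (e0 s0 t0 e1 s1 t1 : ℝ)
    (ha : ∀ X Y : ℝ, pu ≤ X → X ≤ qu → uu ≤ Y → Y ≤ vu → aFun X Y = e0 + s0*X + t0*Y)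
    (hg : ∀ X Y : ℝ, pu ≤ X → X ≤ qu → uu ≤ Y → Y ≤ vu → g X Y = e1 + s1*X + t1*Y) :
    GoodRect p r (pt 2 t) !![s0, t0; s1, t1] := by
  have hσpos : 0 < σ := by rw [hσdef]; positivity
  have hK : (2:ℝ)^k * σ = 1 := by
    rw [hσdef, ← zpow_natCast (2:ℝ) k, ← zpow_add₀ (by norm_num : (2:ℝ) ≠ 0)]
    simp
  have hkpos : (0:ℝ) < 2^k := by positivity
  have hiN : ((i:ℝ)+3) ≤ 2^k := by exact_mod_cast hi
  have hi' : ((i:ℝ)+3)*2*σ ≤ 2 := by nlinarith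
  have hcX : ctrX k = 2 - 3*σ := by rw [ctrX_eq (by omega), hσdef]
  have hcY : ctrY k i = (2*(i:ℝ)+1)*σ := by rw [ctrY_eq, hσdef]
  have hxl : xc (k-1) = 2 - 4*σ := by
    rw [xc_eq (show 1 ≤ k-1 by omega), show -((k-1:ℕ):ℤ) = -(k:ℤ)+1 by omega,
      zpow_add₀ (by norm_num : (2:ℝ) ≠ 0), hσdef]
    ring
  have hxr : xc k = 2 - 2*σ := by rw [xc_eq (by omega), hσdef]
  have hyl : yc k i = (i:ℝ)*2*σ := by rw [yc_eq, hσdef]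
  have hyr : yc k (i+1) = ((i:ℝ)+1)*2*σ := by rw [yc_eq, hσdef]; push_cast; ring
  have hipos : (0:ℝ) ≤ (i:ℝ)*2*σ := by positivity
  have hpuσ : -σ ≤ pu*σ := by nlinarith
  have hquσ : qu*σ ≤ σ := by nlinarith
  have huuσ : -σ ≤ uu*σ := by nlinarith
  have hvuσ : vu*σ ≤ σ := by nlinarith
  set aa := ctrX k + pu*σ with haa
  set bb := ctrX k + qu*σ with hbb
  set cc := ctrY k i + uu*σ with hcc
  set dd := ctrY k i + vu*σ with hdd
  set v : E2 := pt (σ*e0 - s0*ctrX k - t0*ctrY k i) (σ*e1 - s1*ctrX k - t1*ctrY k i) with hv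
  have main : ∀ w ∈ rectS aa bb cc dd, (w ∈ Metric.ball (pt 2 t) r) ∧ (w ∈ Qsq) ∧
      (p w = matCLM !![s0, t0; s1, t1] w + v) := by
    intro w hw
    obtain ⟨hw0, hw1⟩ := hw
    obtain ⟨ha1, ha2⟩ := hw0
    obtain ⟨hb1, hb2⟩ := hw1
    rw [haa, hcX] at ha1
    rw [hbb, hcX] at ha2
    rw [hcc, hcY] at hb1
    rw [hdd, hcY] at hb2
    have h01 : 2-4*σ < w 0 := by linarith
    have h02 : w 0 < 2-2*σ := by linarith
    have h11 : (i:ℝ)*2*σ < w 1 := by nlinarith [hb1, huuσ]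
    have h12 : w 1 < ((i:ℝ)+1)*2*σ := by nlinarith [hb2, hvuσ]
    have hball : w ∈ Metric.ball (pt 2 t) r := by
      apply in_ball_aux hσpos hσr hr
      · rw [abs_le]; constructor <;> linarith
      · exact hdist (w 1) (le_of_lt h11) (le_of_lt h12)
    have hQsq : w ∈ Qsq := by
      refine ⟨⟨by linarith, by linarith⟩, ⟨by linarith, by nlinarith⟩⟩
    have hQki : w ∈ Qki k i := by
      refine ⟨⟨?_, ?_⟩, ⟨?_, ?_⟩⟩
      · rw [hxl]; exact h01
      · rw [hxr]; exact h02
      · rw [hyl]; exact h11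
      · rw [hyr]; exact h12
    have hT : w ∈ Tset := by
      refine ⟨by linarith, by nlinarith, by linarith⟩
    obtain ⟨hp0, hp1⟩ := hp.1 k (by omega) i (by omega) w ⟨hQki, hT⟩
    have hσK : σ*(2:ℝ)^k = 1 := by rw [mul_comm]; exact hK
    have hXl : pu ≤ 2^k * (w 0 - ctrX k) := scale_bound hK hkpos (by rw [hcX]; linarith)
    have hXr : 2^k * (w 0 - ctrX k) ≤ qu := scale_bound' hK hkpos (by rw [hcX]; linarith)
    have hYl : uu ≤ 2^k * (w 1 - ctrY k i) := scale_bound hK hkpos (by rw [hcY]; linarith)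
    have hYr : 2^k * (w 1 - ctrY k i) ≤ vu := scale_bound' hK hkpos (by rw [hcY]; linarith)
    have haf := ha _ _ hXl hXr hYl hYr
    have hgf := hg _ _ hXl hXr hYl hYr
    have hpw0 : p w 0 = σ*e0 + s0*(w 0 - ctrX k) + t0*(w 1 - ctrY k i) := by
      rw [hp0]; unfold resc; rw [← hσdef, haf]
      linear_combination (s0*(w 0 - ctrX k) + t0*(w 1 - ctrY k i)) * hσK
    have hpw1 : p w 1 = σ*e1 + s1*(w 0 - ctrX k) + t1*(w 1 - ctrY k i) := by
      rw [hp1, hsec]; unfold resc; rw [← hσdef, hgf]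
      linear_combination (s1*(w 0 - ctrX k) + t1*(w 1 - ctrY k i)) * hσK
    refine ⟨hball, hQsq, ?_⟩
    ext j
    fin_cases j
    · show p w 0 = _
      rw [add_apply', matCLM_apply, hpw0]
      simp [hv]
      ring
    · show p w 1 = _
      rw [add_apply', matCLM_apply, hpw1]
      simp [hv]
      ring
  refine ⟨aa, bb, cc, dd, v, ?_, ?_, fun w hw => (main w hw).1, fun w hw => (main w hw).2.1,
    fun w hw => (main w hw).2.2⟩
  · rw [haa, hbb, show ctrX k + qu*σ - (ctrX k + pu*σ) = (qu-pu)*σ by ring, hqp]; linarith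
  · rw [hcc, hdd, show ctrY k i + vu*σ - (ctrY k i + uu*σ) = (vu-uu)*σ by ring, hvu]; linarith

set_option maxHeartbeats 2000000 in
lemma core {p : E2 → E2} (hp : PyramidSpec p) {t r : ℝ} (ht0 : 0 ≤ t) (ht2 : t ≤ 2)
    (hr : 0 < r) (hr4 : r < 1/4) : ∀ A ∈ Eset, GoodRect p r (pt 2 t) A := by
  obtain ⟨n, hn⟩ := exists_mem_Ico_zpow (show (0:ℝ) < r/8 by linarith) (one_lt_two)
  obtain ⟨hn1, hn2⟩ := hn
  have hn6 : n ≤ -6 := by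
    by_contra hcon
    push_neg at hcon
    have h5 : ((2:ℝ)^(-5:ℤ)) ≤ 2^n := by
      apply zpow_le_zpow_right₀ one_le_two
      omega
    have h5' : (2:ℝ)^(-5:ℤ) = 1/32 := by norm_num
    rw [h5'] at h5
    linarith
  set k : ℕ := (1 - n).toNat with hkdef
  have hkZ : (k:ℤ) = 1 - n := Int.toNat_of_nonneg (by omega)
  have hk7 : 7 ≤ k := by omega
  set σ : ℝ := (2:ℝ)^(-(k:ℤ)) with hσdef
  have hσpos : 0 < σ := by rw [hσdef]; positivity
  have hσn : σ = (2:ℝ)^(n-1) := by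
    rw [hσdef, hkZ, show -(1-n) = n-1 by ring]
  have h2n : (2:ℝ)^n = 2*σ := by
    have : (2:ℝ)*(2:ℝ)^(n-1) = 2^(1:ℤ)*2^(n-1) := by norm_num
    rw [hσn, this, ← zpow_add₀ (by norm_num : (2:ℝ) ≠ 0)]
    congr 1
    ring
  have h2n1 : (2:ℝ)^(n+1) = 4*σ := by
    rw [zpow_add₀ (by norm_num : (2:ℝ) ≠ 0), h2n]
    norm_num
    ring
  have hσr : σ ≤ r/16 := by rw [h2n] at hn1; linarith
  have hrσ : r ≤ 32*σ := by rw [h2n1] at hn2; linarith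
  have hσ1 : σ ≤ 1/64 := by linarith
  have hK : (2:ℝ)^k * σ = 1 := by
    rw [hσdef, ← zpow_natCast (2:ℝ) k, ← zpow_add₀ (by norm_num : (2:ℝ) ≠ 0)]
    simp
  set M : ℕ := 2^(k-1) - 2 with hM
  have hpow : 2^(k-1)*2 = 2^k := by
    rw [← pow_succ]
    congr 1
    omega
  have h2k1 : 2 ≤ 2^(k-1) := by
    calc 2 = 2^1 := rfl
    _ ≤ 2^(k-1) := Nat.pow_le_pow_right (by norm_num) (by omega)
  have h128 : 128 ≤ 2^k := by
    calc 128 = 2^7 := rfl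
    _ ≤ 2^k := Nat.pow_le_pow_right (by norm_num) hk7
  set m : ℕ := min (⌊t/(4*σ)⌋₊) M with hm
  have hmM : m ≤ M := min_le_right _ _
  have h24 : 2*m + 4 ≤ 2^k := by omega
  have hMr : (M:ℝ) = 2^(k-1) - 2 := by
    rw [hM, Nat.cast_sub h2k1]
    push_cast
    norm_num
  have hpowR : ((2:ℝ)^(k-1))*2 = 2^k := by exact_mod_cast hpow
  have h4M : 4*(M:ℝ)*σ = 2 - 8*σ := by
    rw [hMr]
    linear_combination 2*σ*hpowR + 2*hK
  have hdistPair : ∀ u : ℝ, 4*(m:ℝ)*σ ≤ u → u ≤ (4*(m:ℝ)+4)*σ → |u - t| ≤ 8*σ := by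
    intro u h1 h2
    have hσ4 : 0 < 4*σ := by linarith
    rcases le_or_gt (⌊t/(4*σ)⌋₊) M with hc | hc
    · have hmf : m = ⌊t/(4*σ)⌋₊ := by rw [hm]; exact min_eq_left hc
      have hfl : ((⌊t/(4*σ)⌋₊:ℕ):ℝ) ≤ t/(4*σ) := Nat.floor_le (by positivity)
      have hfu : t/(4*σ) < (⌊t/(4*σ)⌋₊:ℝ) + 1 := Nat.lt_floor_add_one _
      rw [hmf] at h1 h2
      have htl : (⌊t/(4*σ)⌋₊:ℝ)*(4*σ) ≤ t := (le_div_iff₀ hσ4).mp hfl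
      have htu : t < ((⌊t/(4*σ)⌋₊:ℝ)+1)*(4*σ) := (div_lt_iff₀ hσ4).mp hfu
      rw [abs_le]
      constructor <;> linarith
    · have hmf : m = M := by rw [hm]; exact min_eq_right (le_of_lt hc)
      have hflo : (M:ℝ)+1 ≤ (⌊t/(4*σ)⌋₊:ℝ) := by exact_mod_cast hc
      have hfl : ((⌊t/(4*σ)⌋₊:ℕ):ℝ) ≤ t/(4*σ) := Nat.floor_le (by positivity)
      have htl : ((M:ℝ)+1)*(4*σ) ≤ t := (le_div_iff₀ hσ4).mp (le_trans hflo hfl)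
      rw [hmf] at h1 h2
      rw [abs_le]
      constructor <;> linarith
  intro A hA
  simp only [Eset, mem_insert_iff, mem_singleton_iff] at hA
  have hsecd : ∀ u v : ℝ, secondFun k (2*m) u v = resc dFun k u v := by
    intro u v
    unfold secondFun
    rw [if_neg (by omega), if_pos (by omega)]
  have hsecc : ∀ u v : ℝ, secondFun k (2*m+1) u v = resc cFun k u v := by
    intro u v
    unfold secondFun
    rw [if_neg (by omega), if_neg (by omega)]
  have hdistd : ∀ u : ℝ, ((2*m:ℕ):ℝ)*2*σ ≤ u → u ≤ (((2*m:ℕ):ℝ)+1)*2*σ → |u - t| ≤ 8*σ := by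
    intro u h1 h2
    push_cast at h1 h2
    exact hdistPair u (by linarith) (by linarith)
  have hdistc : ∀ u : ℝ, ((2*m+1:ℕ):ℝ)*2*σ ≤ u → u ≤ (((2*m+1:ℕ):ℝ)+1)*2*σ → |u - t| ≤ 8*σ := by
    intro u h1 h2
    push_cast at h1 h2
    exact hdistPair u (by linarith) (by linarith)
  have hid : 2*m + 3 ≤ 2^k := by omega
  have hic : (2*m+1) + 3 ≤ 2^k := by omega
  rcases hA with rfl|rfl|rfl|rfl|rfl|rfl|rfl|rfl
  · -- A1
    refine mk_good hp hk7 hσdef hid hr hσr hrσ hσ1 dFun hsecd hdistd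
      (-(5/8)) (-(3/8)) (-(1/8)) (1/8) (by norm_num) (by norm_num) (by norm_num)
      (by norm_num) (by norm_num) (by norm_num) 1 1 0 1 0 1 ?_ ?_
    · intro X Y h1 h2 h3 h4
      have hY : |Y| ≤ 1/8 := abs_le.mpr ⟨by linarith, by linarith⟩
      rw [aFun_left (by linarith)]
      ring
    · intro X Y h1 h2 h3 h4
      unfold dFun
      rw [if_neg (by rw [not_le, abs_of_nonpos (show X ≤ (0:ℝ) by linarith)]; linarith),
        if_pos (abs_le.mpr ⟨by linarith, by linarith⟩)]
      ring
  · -- -A1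
    rw [negA1]
    refine mk_good hp hk7 hσdef hid hr hσr hrσ hσ1 dFun hsecd hdistd
      (5/8) (7/8) (1/8) (3/8) (by norm_num) (by norm_num) (by norm_num)
      (by norm_num) (by norm_num) (by norm_num) 1 (-1) 0 1 0 (-1) ?_ ?_
    · intro X Y h1 h2 h3 h4
      have hY : |Y| ≤ 3/8 := abs_le.mpr ⟨by linarith, by linarith⟩
      rw [aFun_right (by linarith)]
      ring
    · intro X Y h1 h2 h3 h4
      have hXa : |X| = X := abs_of_nonneg (by linarith)
      have hYa : |Y| = Y := abs_of_nonneg (by linarith)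
      unfold dFun
      rw [if_neg (by rw [not_le, hXa]; linarith),
        if_neg (by rw [not_le, hYa]; linarith),
        if_neg (by rw [not_le, hXa]; linarith), hYa]
      ring
  · -- A2
    refine mk_good hp hk7 hσdef hid hr hσr hrσ hσ1 dFun hsecd hdistd
      (-(3/8)) (-(1/8)) (-(7/8)) (-(5/8)) (by norm_num) (by norm_num) (by norm_num)
      (by norm_num) (by norm_num) (by norm_num) 1 0 1 1 1 0 ?_ ?_
    · intro X Y h1 h2 h3 h4
      have hX : |X| ≤ 3/8 := abs_le.mpr ⟨by linarith, by linarith⟩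
      rw [aFun_bot (by linarith)]
      ring
    · intro X Y h1 h2 h3 h4
      have hXa : |X| = -X := abs_of_nonpos (by linarith)
      have hYa : |Y| = -Y := abs_of_nonpos (by linarith)
      unfold dFun
      rw [if_neg (by rw [not_le, hXa]; linarith),
        if_neg (by rw [not_le, hYa]; linarith),
        if_pos (by rw [hXa]; linarith), hXa]
      ring
  · -- -A2
    rw [negA2]
    refine mk_good hp hk7 hσdef hid hr hσr hrσ hσ1 dFun hsecd hdistd
      (-(1/8)) (1/8) (5/8) (7/8) (by norm_num) (by norm_num) (by norm_num)
      (by norm_num) (by norm_num) (by norm_num) 1 0 (-1) 1 (-1) 0 ?_ ?_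
    · intro X Y h1 h2 h3 h4
      have hX : |X| ≤ 1/8 := abs_le.mpr ⟨by linarith, by linarith⟩
      rw [aFun_top (by linarith)]
      ring
    · intro X Y h1 h2 h3 h4
      have hX : |X| ≤ 1/8 := abs_le.mpr ⟨by linarith, by linarith⟩
      unfold dFun
      rw [if_pos (by linarith)]
      ring
  · -- A3
    refine mk_good hp hk7 hσdef hid hr hσr hrσ hσ1 dFun hsecd hdistd
      (5/8) (7/8) (-(3/8)) (-(1/8)) (by norm_num) (by norm_num) (by norm_num)
      (by norm_num) (by norm_num) (by norm_num) 1 (-1) 0 1 0 1 ?_ ?_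
    · intro X Y h1 h2 h3 h4
      have hY : |Y| ≤ 3/8 := abs_le.mpr ⟨by linarith, by linarith⟩
      rw [aFun_right (by linarith)]
      ring
    · intro X Y h1 h2 h3 h4
      have hXa : |X| = X := abs_of_nonneg (by linarith)
      have hYa : |Y| = -Y := abs_of_nonpos (by linarith)
      unfold dFun
      rw [if_neg (by rw [not_le, hXa]; linarith),
        if_neg (by rw [not_le, hYa]; linarith),
        if_neg (by rw [not_le, hXa]; linarith), hYa]
      ring
  · -- -A3 : c-square
    rw [negA3]
    refine mk_good hp hk7 hσdef hic hr hσr hrσ hσ1 cFun hsecc hdistc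
      (-(5/8)) (-(3/8)) (-(1/8)) (1/8) (by norm_num) (by norm_num) (by norm_num)
      (by norm_num) (by norm_num) (by norm_num) 1 1 0 1 0 (-1) ?_ ?_
    · intro X Y h1 h2 h3 h4
      have hY : |Y| ≤ 1/8 := abs_le.mpr ⟨by linarith, by linarith⟩
      rw [aFun_left (by linarith)]
      ring
    · intro X Y h1 h2 h3 h4
      unfold cFun
      rw [if_neg (by rw [not_le, abs_of_nonpos (show X ≤ (0:ℝ) by linarith)]; linarith),
        if_pos (abs_le.mpr ⟨by linarith, by linarith⟩)]
      ring
  · -- A4 : c-square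
    refine mk_good hp hk7 hσdef hic hr hσr hrσ hσ1 cFun hsecc hdistc
      (-(3/8)) (-(1/8)) (5/8) (7/8) (by norm_num) (by norm_num) (by norm_num)
      (by norm_num) (by norm_num) (by norm_num) 1 0 (-1) 1 1 0 ?_ ?_
    · intro X Y h1 h2 h3 h4
      have hX : |X| ≤ 3/8 := abs_le.mpr ⟨by linarith, by linarith⟩
      rw [aFun_top (by linarith)]
      ring
    · intro X Y h1 h2 h3 h4
      have hXa : |X| = -X := abs_of_nonpos (by linarith)
      unfold cFun
      rw [if_pos (by rw [hXa]; linarith), hXa]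
      ring
  · -- -A4
    rw [negA4]
    refine mk_good hp hk7 hσdef hid hr hσr hrσ hσ1 dFun hsecd hdistd
      (1/8) (3/8) (-(7/8)) (-(5/8)) (by norm_num) (by norm_num) (by norm_num)
      (by norm_num) (by norm_num) (by norm_num) 1 0 1 1 (-1) 0 ?_ ?_
    · intro X Y h1 h2 h3 h4
      have hX : |X| ≤ 3/8 := abs_le.mpr ⟨by linarith, by linarith⟩
      rw [aFun_bot (by linarith)]
      ring
    · intro X Y h1 h2 h3 h4
      have hXa : |X| = X := abs_of_nonneg (by linarith)
      have hYa : |Y| = -Y := abs_of_nonpos (by linarith)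
      unfold dFun
      rw [if_neg (by rw [not_le, hXa]; linarith),
        if_neg (by rw [not_le, hYa]; linarith),
        if_pos (by rw [hXa]; linarith), hXa]
      ring

lemma allGood_right {p : E2 → E2} (hp : PyramidSpec p) {t r : ℝ} (ht : |t| ≤ 2)
    (hr : 0 < r) (hr4 : r < 1/4) : ∀ A ∈ Eset, GoodRect p r (pt 2 t) A := by
  rcases le_or_gt 0 t with h | h
  · exact core hp h (abs_le.mp ht).2 hr hr4
  · intro A hA
    have hB : A * (-A3) ∈ Eset := Eset_mul_y hA
    have h1 := core hp (show (0:ℝ) ≤ -t by linarith) (by linarith [(abs_le.mp ht).1]) hr hr4 _ hB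
    have h2 := trans_yflip (fun x y => (hp.2.1 x y).2.2) h1
    rw [sq_mul_self (-A3) (-A3) nA3_sq A, neg_neg] at h2
    exact h2

lemma allGood_left {p : E2 → E2} (hp : PyramidSpec p) {t r : ℝ} (ht : |t| ≤ 2)
    (hr : 0 < r) (hr4 : r < 1/4) : ∀ A ∈ Eset, GoodRect p r (pt (-2) t) A := by
  intro A hA
  have hB : A * A3 ∈ Eset := Eset_mul_x hA
  have h1 := allGood_right hp ht hr hr4 _ hB
  have h2 := trans_xflip (fun x y => (hp.2.1 x y).2.1) h1
  rw [sq_mul_self A3 A3 A3_sq A] at h2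
  exact h2

lemma allGood_top {p : E2 → E2} (hp : PyramidSpec p) {t r : ℝ} (ht : |t| ≤ 2)
    (hr : 0 < r) (hr4 : r < 1/4) : ∀ A ∈ Eset, GoodRect p r (pt t 2) A := by
  intro A hA
  have hB : A * A2 ∈ Eset := Eset_mul_swap hA
  have h1 := allGood_right hp ht hr hr4 _ hB
  have h2 := trans_swap (fun x y => (hp.2.1 x y).1) h1
  rw [sq_mul_self A2 A2 A2_sq A] at h2
  exact h2

lemma allGood_bottom {p : E2 → E2} (hp : PyramidSpec p) {t r : ℝ} (ht : |t| ≤ 2)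
    (hr : 0 < r) (hr4 : r < 1/4) : ∀ A ∈ Eset, GoodRect p r (pt t (-2)) A := by
  intro A hA
  have hB : A * (-A3) ∈ Eset := Eset_mul_y hA
  have h1 := allGood_top hp ht hr hr4 _ hB
  have h2 := trans_yflip (fun x y => (hp.2.1 x y).2.2) h1
  rw [sq_mul_self (-A3) (-A3) nA3_sq A] at h2
  exact h2

lemma frontier_mem {z : E2} (hz : z ∈ frontier Qsq) :
    (|z 0| ≤ 2 ∧ |z 1| ≤ 2) ∧ (z 0 = 2 ∨ z 0 = -2 ∨ z 1 = 2 ∨ z 1 = -2) := by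
  have hQopen : IsOpen Qsq := isOpen_rectS (-2) 2 (-2) 2
  have hcl : closure Qsq ⊆ {w : E2 | |w 0| ≤ 2 ∧ |w 1| ≤ 2} := by
    apply closure_minimal
    · intro w hw
      obtain ⟨⟨h1, h2⟩, ⟨h3, h4⟩⟩ := hw
      exact ⟨abs_le.mpr ⟨le_of_lt h1, le_of_lt h2⟩, abs_le.mpr ⟨le_of_lt h3, le_of_lt h4⟩⟩
    · have hset : {w : E2 | |w 0| ≤ 2 ∧ |w 1| ≤ 2} =
          (EuclideanSpace.proj (0:Fin 2) : E2 →L[ℝ] ℝ) ⁻¹' (Set.Icc (-2) 2) ∩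
          (EuclideanSpace.proj (1:Fin 2) : E2 →L[ℝ] ℝ) ⁻¹' (Set.Icc (-2) 2) := by
        ext w
        simp [abs_le, Set.mem_Icc]
      rw [hset]
      exact (isClosed_Icc.preimage (EuclideanSpace.proj (0:Fin 2)).continuous).inter
        (isClosed_Icc.preimage (EuclideanSpace.proj (1:Fin 2)).continuous)
  have hz2 : z ∉ Qsq := fun h => hz.2 (by rw [hQopen.interior_eq]; exact h)
  obtain ⟨ha, hb⟩ := hcl hz.1
  refine ⟨⟨ha, hb⟩, ?_⟩
  by_contra hcon
  push_neg at hcon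
  obtain ⟨c1, c2, c3, c4⟩ := hcon
  obtain ⟨ha1, ha2⟩ := abs_le.mp ha
  obtain ⟨hb1, hb2⟩ := abs_le.mp hb
  exact hz2 ⟨⟨lt_of_le_of_ne ha1 (Ne.symm c2), lt_of_le_of_ne ha2 c1⟩,
    ⟨lt_of_le_of_ne hb1 (Ne.symm c4), lt_of_le_of_ne hb2 c3⟩⟩

/-- there is a constant `c > 0` (one may take `c = 1/128`) such that for every
`z ∈ ∂Q`, every radius `0 < r < 1/4` and every matrix `±A_i ∈ E`, the Lebesgue measure of
`B(z,r) ∩ Ω^{p_v}_{±i}` is at least `c·r²`. -/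
theorem stmt3 (p : E2 → E2) (hp : PyramidSpec p) :
    ∃ c : ℝ, 0 < c ∧
      ∀ z ∈ frontier Qsq, ∀ r : ℝ, 0 < r → r < 1 / 4 →
        ∀ A ∈ Eset, ENNReal.ofReal (c * r ^ 2) ≤ volume (Metric.ball z r ∩ OmegaSet p A) := by
  refine ⟨1/16384, by norm_num, ?_⟩
  intro z hz r hr hr4 A hA
  obtain ⟨⟨h0, h1⟩, hcase⟩ := frontier_mem hz
  have key : GoodRect p r z A := by
    rcases hcase with h|h|h|h
    · rw [← pt_eta z, h]
      exact allGood_right hp h1 hr hr4 A hA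
    · rw [← pt_eta z, h]
      exact allGood_left hp h1 hr hr4 A hA
    · rw [← pt_eta z, h]
      exact allGood_top hp h0 hr hr4 A hA
    · rw [← pt_eta z, h]
      exact allGood_bottom hp h0 hr hr4 A hA
  exact goodRect_volume hr key

end
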